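/- Let G be a torsionless abelian group of infinite rank and σ : G → G ⊗ ℚ a homomorphism of finite rank. Then there exists a nonzero homomorphism φ : G → ℤ vanishing on G ∩ Range(σ), and such a φ can be chosen surjective onto ℤ. -/

import Mathlib

open TensorProduct

private instance flatQZ : Module.Flat ℤ ℚ := IsLocalization.flat ℚ (nonZeroDivisors ℤ)

open TensorProduct in
/-- For a torsionless abelian group `G` of infinite rank and a finite-rank homomorphism
`σ : G → ℚ ⊗ G`, there is a surjective (hence nonzero) homomorphism `φ : G → ℤ`
vanishing on `G ∩ Range σ` (the preimage in `G` of the range of `σ`). -/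
theorem stmt3 {G : Type*} [AddCommGroup G]
    (htorsionless : ∀ g : G, g ≠ 0 → ∃ φ : G →+ ℤ, φ g ≠ 0)
    (hrank : Cardinal.aleph0 ≤ Module.rank ℚ (ℚ ⊗[ℤ] G))
    (σ : G →+ ℚ ⊗[ℤ] G)
    (hσ : Module.rank ℚ (Submodule.span ℚ (Set.range σ)) < Cardinal.aleph0) :
    ∃ φ : G →+ ℤ, Function.Surjective φ ∧
      ∀ g : G, ((1:ℚ) ⊗ₜ[ℤ] g) ∈ Set.range σ → φ g = 0 := by
  classical
  set ι : G → ℚ ⊗[ℤ] G := fun g => (1:ℚ) ⊗ₜ[ℤ] g with hιdef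
  -- the span of the range of σ is finitely generated
  haveI hfree : Module.Free ℚ (Submodule.span ℚ (Set.range ⇑σ)) :=
    Module.Free.of_divisionRing ℚ _
  have hfin : Module.Finite ℚ (Submodule.span ℚ (Set.range ⇑σ)) :=
    Module.rank_lt_aleph0_iff.mp hσ
  have hfg : (Submodule.span ℚ (Set.range ⇑σ)).FG := by
    rw [← Submodule.fg_top]
    exact Module.finite_def.mp hfin
  obtain ⟨t, ht⟩ := hfg
  -- the pure tensors 1 ⊗ g span everything
  have htotal : ∀ z : ℚ ⊗[ℤ] G, z ∈ Submodule.span ℚ (Set.range ι) := by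
    intro z
    induction z using TensorProduct.induction_on with
    | zero => exact Submodule.zero_mem _
    | tmul q g =>
        have hq : q ⊗ₜ[ℤ] g = q • ((1:ℚ) ⊗ₜ[ℤ] g) := by
          rw [TensorProduct.smul_tmul', smul_eq_mul, mul_one]
        rw [hq]
        exact Submodule.smul_mem _ _ (Submodule.subset_span ⟨g, rfl⟩)
    | add x y hx hy => exact Submodule.add_mem _ hx hy
  -- a finite set S ⊆ G with span (range σ) ≤ span (ι '' S)
  have hSex : ∃ S : Set G, S.Finite ∧
      Submodule.span ℚ (Set.range ⇑σ) ≤ Submodule.span ℚ (ι '' S) := by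
    have hw : ∀ w : ℚ ⊗[ℤ] G, ∃ S : Set G, S.Finite ∧
        w ∈ Submodule.span ℚ (ι '' S) := by
      intro w
      obtain ⟨u, hu, hwu⟩ := Submodule.mem_span_finite_of_mem_span (htotal w)
      have hch : ∀ y ∈ u, ∃ g : G, ι g = y := fun y hy => hu hy
      choose f hf using hch
      refine ⟨↑(u.attach.image fun y => f y.1 y.2), Set.toFinite _, ?_⟩
      have hsub : (↑u : Set (ℚ ⊗[ℤ] G)) ⊆ ι '' ↑(u.attach.image fun y => f y.1 y.2) := by
        intro y hy
        exact ⟨f y hy, by simp [Finset.mem_image]; exact ⟨y, hy, rfl⟩, hf y hy⟩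
      exact Submodule.span_mono hsub hwu
    choose! Sf hSfin hSmem using hw
    refine ⟨⋃ w ∈ t, Sf w, t.finite_toSet.biUnion fun w _ => hSfin w, ?_⟩
    rw [← ht, Submodule.span_le]
    intro w hwt
    refine Submodule.span_mono (Set.image_mono ?_) (hSmem w)
    exact Set.subset_biUnion_of_mem hwt
  obtain ⟨S, hSfin, hWle⟩ := hSex
  haveI : Fintype ↥S := hSfin.fintype
  -- key step : there is a nonzero φ vanishing on S
  have hkey : ∃ φ : G →+ ℤ, φ ≠ 0 ∧ ∀ x ∈ S, φ x = 0 := by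
    by_contra hcon
    push_neg at hcon
    have hzero : ∀ φ : G →+ ℤ, (∀ x ∈ S, φ x = 0) → φ = 0 := by
      intro φ h
      by_contra h0
      obtain ⟨x, hx, hx0⟩ := hcon φ h0
      exact hx0 (h x hx)
    -- evaluation map into ℤ^S is injective
    let e : (G →+ ℤ) →ₗ[ℤ] (S → ℤ) :=
      { toFun := fun φ x => φ x
        map_add' := fun φ ψ => rfl
        map_smul' := fun n φ => by
          funext x
          simp }
    have he : Function.Injective e := by
      intro φ ψ h
      have h2 : φ - ψ = 0 := by
        apply hzero
        intro x hx
        have := congrFun h ⟨x, hx⟩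
        simp only [e, LinearMap.coe_mk, AddHom.coe_mk] at this
        simp [AddMonoidHom.sub_apply, this]
      have := sub_eq_zero.mp h2
      exact this
    haveI : IsNoetherian ℤ (G →+ ℤ) := isNoetherian_of_injective e he
    obtain ⟨Φ, hΦ⟩ := IsNoetherian.noetherian (⊤ : Submodule ℤ (G →+ ℤ))
    -- the map G → ℤ^Φ is injective
    let F : G →ₗ[ℤ] (↥Φ → ℤ) :=
      { toFun := fun g ψ => ψ.1 g
        map_add' := fun a b => by funext ψ; simp
        map_smul' := fun n a => by funext ψ; simp }
    have hFinj : Function.Injective F := by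
      intro a b hab
      have hab' : F (a - b) = 0 := by rw [map_sub, hab, sub_self]
      by_contra hne
      have hne' : a - b ≠ 0 := sub_ne_zero.mpr fun h => hne h
      obtain ⟨ψ, hψ⟩ := htorsionless (a - b) hne'
      apply hψ
      -- ψ ∈ span ℤ Φ = ⊤
      have hψmem : ψ ∈ Submodule.span ℤ (↑Φ : Set (G →+ ℤ)) := by
        rw [hΦ]; trivial
      let ev : (G →+ ℤ) →ₗ[ℤ] ℤ :=
        { toFun := fun χ => χ (a - b)
          map_add' := fun χ₁ χ₂ => rfl
          map_smul' := fun n χ => by simp }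
      have hev : Submodule.span ℤ (↑Φ : Set (G →+ ℤ)) ≤ LinearMap.ker ev := by
        rw [Submodule.span_le]
        intro χ hχ
        have := congrFun hab' ⟨χ, hχ⟩
        simpa [LinearMap.mem_ker, ev, F] using this
      simpa [ev] using hev hψmem
    -- base change to ℚ stays injective, contradicting infinite rank
    have hinj : Function.Injective (F.baseChange ℚ) := by
      have : ⇑(F.baseChange ℚ) = ⇑(F.lTensor ℚ) := LinearMap.baseChange_eq_ltensor F
      rw [this]
      exact Module.Flat.lTensor_preserves_injective_linearMap F hFinj
    have hle := LinearMap.rank_le_of_injective _ hinj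
    have hlt : Module.rank ℚ (ℚ ⊗[ℤ] (↥Φ → ℤ)) < Cardinal.aleph0 :=
      Module.rank_lt_aleph0 ℚ _
    exact absurd ((hrank.trans hle).trans_lt hlt) (lt_irrefl _)
  obtain ⟨φ, hφne, hφS⟩ := hkey
  -- extend φ to a ℚ-linear functional on ℚ ⊗ G
  let f : G →ₗ[ℤ] ℚ :=
    { toFun := fun g => (φ g : ℚ)
      map_add' := fun a b => by simp
      map_smul' := fun n a => by simp }
  let φhat : ℚ ⊗[ℤ] G →ₗ[ℚ] ℚ := f.liftBaseChange ℚ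
  have hvanish : ∀ g : G, ((1:ℚ) ⊗ₜ[ℤ] g) ∈ Set.range ⇑σ → φ g = 0 := by
    intro g hg
    have h1 : ι g ∈ Submodule.span ℚ (ι '' S) := hWle (Submodule.subset_span hg)
    have h2 : Submodule.span ℚ (ι '' S) ≤ LinearMap.ker φhat := by
      rw [Submodule.span_le]
      rintro _ ⟨x, hx, rfl⟩
      simp [LinearMap.mem_ker, φhat, hιdef, f, hφS x hx]
    have h3 := h2 h1
    rw [LinearMap.mem_ker] at h3
    have h4 : ((φ g : ℤ) : ℚ) = 0 := by
      simpa [φhat, hιdef, f] using h3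
    exact_mod_cast h4
  -- normalize φ to be surjective
  obtain ⟨n, hn⟩ := Int.subgroup_cyclic φ.range
  have hmemrange : ∀ g : G, φ g ∈ AddSubgroup.closure ({n} : Set ℤ) := by
    intro g
    rw [← hn]
    exact ⟨g, rfl⟩
  have hn0 : n ≠ 0 := by
    rintro rfl
    apply hφne
    ext g
    obtain ⟨k, hk⟩ := AddSubgroup.mem_closure_singleton.mp (hmemrange g)
    simpa using hk.symm
  have hdvd : ∀ g : G, n ∣ φ g := by
    intro g
    obtain ⟨k, hk⟩ := AddSubgroup.mem_closure_singleton.mp (hmemrange g)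
    exact ⟨k, by rw [← hk, smul_eq_mul, mul_comm]⟩
  let φ' : G →+ ℤ :=
    { toFun := fun g => φ g / n
      map_zero' := by simp
      map_add' := by
        intro a b
        obtain ⟨ka, hka⟩ := hdvd a
        obtain ⟨kb, hkb⟩ := hdvd b
        simp only [map_add, hka, hkb, ← mul_add]
        rw [Int.mul_ediv_cancel_left _ hn0, Int.mul_ediv_cancel_left _ hn0,
          Int.mul_ediv_cancel_left _ hn0] }
  have hg0 : ∃ g₀ : G, φ g₀ = n := by
    have : n ∈ φ.range := by
      rw [hn]
      exact AddSubgroup.subset_closure rfl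
    exact this
  obtain ⟨g₀, hg₀⟩ := hg0
  refine ⟨φ', ?_, ?_⟩
  · intro m
    refine ⟨m • g₀, ?_⟩
    show φ (m • g₀) / n = m
    rw [map_zsmul, hg₀, smul_eq_mul, Int.mul_ediv_cancel _ hn0]
  · intro g hg
    show φ g / n = 0
    rw [hvanish g hg, Int.zero_ediv]
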